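/- Exponential lower bound on solutions: let ν > 0, let f0 ≥ 0 be integrable on ℝ^d, and let f be a nonnegative, integrable strong solution of ∂_t f = Q[f] − 2ν|k|²f with f(0,·) = f0. Then for all t ≥ 0 and all k ∈ ℝ^d, f(t,k) ≥ f0(k) e^{−(2ν|k|² + 4|k|)t}. Consequently, for every R0 > 0, ‖f(t,·)·χ_{R0}‖_{L¹} ≥ e^{−(2νR0² + 4R0)t} ‖f0·χ_{R0}‖_{L¹}, where χ_{R0} is the indicator of the ball of radius R0 centered at the origin of ℝ^d. -/

import Mathlib

noncomputable section
open MeasureTheory Filter Set Real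

abbrev Sp (d : ℕ) : Type := EuclideanSpace ℝ (Fin d)

/-- Dispersion relation ω_k = √(λ1 + λ2 |k|²). -/
def omg (l1 l2 : ℝ) {d : ℕ} (k : Sp d) : ℝ := Real.sqrt (l1 + l2 * ‖k‖ ^ 2)

/-- Zeroth moment 𝔐₀[f] = ∫ f. -/
def M0 {d : ℕ} (f : Sp d → ℝ) : ℝ := ∫ k, f k

/-- Resonance broadening Γ_{k,k1,k2}[f]. -/
def Gam {d : ℕ} (f : Sp d → ℝ) (k k1 k2 : Sp d) : ℝ :=
  (‖k‖ ^ 2 + ‖k1‖ ^ 2 + ‖k2‖ ^ 2) * M0 f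

/-- Lorentzian L_f(ζ; k,k1,k2) = Γ/(ζ² + Γ²). -/
def Lor {d : ℕ} (f : Sp d → ℝ) (z : ℝ) (k k1 k2 : Sp d) : ℝ :=
  Gam f k k1 k2 / (z ^ 2 + Gam f k k1 k2 ^ 2)

/-- Collision kernel |V_{k,k1,k2}|² = |k||k1||k2|. -/
def Vsq {d : ℕ} (k k1 k2 : Sp d) : ℝ := ‖k‖ * ‖k1‖ * ‖k2‖

/-- Collision operator Q[f] after eliminating the Dirac delta enforcing k = k1 + k2. -/
def Qop (l1 l2 : ℝ) {d : ℕ} (f : Sp d → ℝ) (k : Sp d) : ℝ :=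
  (∫ k1, Vsq k k1 (k - k1) *
      Lor f (omg l1 l2 k - omg l1 l2 k1 - omg l1 l2 (k - k1)) k k1 (k - k1) *
      (f k1 * f (k - k1) - f k * f k1 - f k * f (k - k1)))
  - 2 * ∫ k2, Vsq (k + k2) k k2 *
      Lor f (omg l1 l2 (k + k2) - omg l1 l2 k - omg l1 l2 k2) (k + k2) k k2 *
      (f k * f k2 - f k * f (k + k2) - f (k + k2) * f k2)

/-- Weighted L¹ norm ‖g‖_{L¹_N} = ∫ |g| ω^N. -/
def wnorm (l1 l2 N : ℝ) {d : ℕ} (g : Sp d → ℝ) : ℝ := ∫ k, |g k| * omg l1 l2 k ^ N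

/-- N-th moment 𝔐_N[g] = ∫ ω^N g. -/
def Mom (l1 l2 N : ℝ) {d : ℕ} (g : Sp d → ℝ) : ℝ := ∫ k, omg l1 l2 k ^ N * g k

/-- Kernel of the first (k = k1 + k2) family of collision integrals. -/
def Kern1 (l1 l2 : ℝ) {d : ℕ} (f : Sp d → ℝ) (k k1 : Sp d) : ℝ :=
  Vsq k k1 (k - k1) *
    Lor f (omg l1 l2 k - omg l1 l2 k1 - omg l1 l2 (k - k1)) k k1 (k - k1)

/-- Kernel of the second (k1 = k + k2) family of collision integrals. -/
def Kern2 (l1 l2 : ℝ) {d : ℕ} (f : Sp d → ℝ) (k k2 : Sp d) : ℝ :=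
  Vsq (k + k2) k k2 *
    Lor f (omg l1 l2 (k + k2) - omg l1 l2 k - omg l1 l2 k2) (k + k2) k k2


/-- Core bound on the Lorentzian kernel. -/
lemma lor_le_aux (v S z M w : ℝ) (hv : 0 ≤ v) (hS : 0 ≤ S) (hM : 0 ≤ M)
    (hw : 0 ≤ w) (hvS : 2 * v ≤ S * w) :
    v * (S * M / (z ^ 2 + (S * M) ^ 2)) ≤ w / (2 * M) := by
  rcases hM.eq_or_lt with h | h
  · simp [← h]
  rcases hS.eq_or_lt with hS0 | hS0
  · have hv0 : v = 0 := le_antisymm (by nlinarith) hv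
    have : (0:ℝ) ≤ w / (2 * M) := by positivity
    simpa [hv0] using this
  have hG : 0 < S * M := mul_pos hS0 h
  have h1 : S * M / (z ^ 2 + (S * M) ^ 2) ≤ 1 / (S * M) := by
    rw [div_le_div_iff₀ (by positivity) hG]
    nlinarith [sq_nonneg z]
  calc v * (S * M / (z ^ 2 + (S * M) ^ 2)) ≤ v * (1 / (S * M)) :=
        mul_le_mul_of_nonneg_left h1 hv
    _ ≤ w / (2 * M) := by
        rw [mul_one_div, div_le_div_iff₀ hG (by positivity)]
        nlinarith [mul_nonneg (mul_nonneg hw h.le) hS]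

lemma M0_nonneg {d : ℕ} (g : Sp d → ℝ) (hg : ∀ x, 0 ≤ g x) : 0 ≤ M0 g :=
  integral_nonneg hg

lemma kern1_nonneg (l1 l2 : ℝ) {d : ℕ} (g : Sp d → ℝ) (hg : ∀ x, 0 ≤ g x)
    (k k1 : Sp d) : 0 ≤ Kern1 l1 l2 g k k1 := by
  have hM : 0 ≤ M0 g := M0_nonneg g hg
  unfold Kern1 Vsq Lor Gam
  have h1 : (0:ℝ) ≤ ‖k‖ * ‖k1‖ * ‖k - k1‖ := by positivity
  refine mul_nonneg h1 (div_nonneg ?_ ?_)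
  · exact mul_nonneg (by positivity) hM
  · positivity

lemma kern2_nonneg (l1 l2 : ℝ) {d : ℕ} (g : Sp d → ℝ) (hg : ∀ x, 0 ≤ g x)
    (k k2 : Sp d) : 0 ≤ Kern2 l1 l2 g k k2 := by
  have hM : 0 ≤ M0 g := M0_nonneg g hg
  unfold Kern2 Vsq Lor Gam
  have h1 : (0:ℝ) ≤ ‖k + k2‖ * ‖k‖ * ‖k2‖ := by positivity
  refine mul_nonneg h1 (div_nonneg ?_ ?_)
  · exact mul_nonneg (by positivity) hM
  · positivity

lemma kern1_le (l1 l2 : ℝ) {d : ℕ} (g : Sp d → ℝ) (hg : ∀ x, 0 ≤ g x)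
    (k k1 : Sp d) : Kern1 l1 l2 g k k1 ≤ ‖k‖ / (2 * M0 g) := by
  have hM : 0 ≤ M0 g := M0_nonneg g hg
  unfold Kern1 Vsq Lor Gam
  apply lor_le_aux _ _ _ _ _ (by positivity) (by positivity) hM (norm_nonneg k)
  nlinarith [mul_nonneg (norm_nonneg k) (sq_nonneg (‖k1‖ - ‖k - k1‖)),
    mul_nonneg (norm_nonneg k) (sq_nonneg ‖k‖)]

lemma kern2_le (l1 l2 : ℝ) {d : ℕ} (g : Sp d → ℝ) (hg : ∀ x, 0 ≤ g x)
    (k k2 : Sp d) : Kern2 l1 l2 g k k2 ≤ ‖k‖ / (2 * M0 g) := by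
  have hM : 0 ≤ M0 g := M0_nonneg g hg
  unfold Kern2 Vsq Lor Gam
  apply lor_le_aux _ _ _ _ _ (by positivity) (by positivity) hM (norm_nonneg k)
  nlinarith [mul_nonneg (norm_nonneg k) (sq_nonneg (‖k + k2‖ - ‖k2‖)),
    mul_nonneg (norm_nonneg k) (sq_nonneg ‖k‖)]

lemma div_mul_bound (x y M : ℝ) (hx : 0 ≤ x) (hy : 0 ≤ y) (hM : 0 ≤ M) :
    x / (2 * M) * y * M ≤ x * y / 2 := by
  rcases hM.eq_or_lt with h | h
  · simp [← h]; positivity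
  · have : x / (2 * M) * y * M = x * y / 2 := by field_simp
    exact this.le

/-- Exponential lower bound on solutions: if f is a nonnegative integrable
strong solution of ∂_t f = Q[f] − 2ν|k|²f with f(0,·) = f0 ≥ 0 integrable, then
f(t,k) ≥ f0(k)·e^{−(2ν|k|²+4|k|)t} for all t ≥ 0, k; consequently for every R0 > 0,
‖f(t)·χ_{R0}‖_{L¹} ≥ e^{−(2νR0²+4R0)t}·‖f0·χ_{R0}‖_{L¹}. -/
theorem solution_exponential_lower_bound {d : ℕ} (hd : 2 ≤ d) (l1 l2 ν : ℝ)
    (hl1 : 0 < l1) (hl2 : 0 < l2) (hν : 0 < ν)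
    (f0 : Sp d → ℝ) (hf0 : ∀ k, 0 ≤ f0 k) (hf0i : Integrable f0)
    (f : ℝ → Sp d → ℝ) (hinit : f 0 = f0)
    (hpos : ∀ t k, 0 ≤ f t k) (hint : ∀ t, Integrable (f t))
    (hsol : ∀ t k, HasDerivAt (fun s => f s k)
      (Qop l1 l2 (f t) k - 2 * ν * ‖k‖ ^ 2 * f t k) t)
    (hreg : ∀ t (k : Sp d),
      Integrable (fun k1 => Kern1 l1 l2 (f t) k k1 * (f t k1 * f t (k - k1))) ∧
      Integrable (fun k1 => Kern1 l1 l2 (f t) k k1 * (f t k * f t k1)) ∧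
      Integrable (fun k1 => Kern1 l1 l2 (f t) k k1 * (f t k * f t (k - k1))) ∧
      Integrable (fun k2 => Kern2 l1 l2 (f t) k k2 * (f t k * f t k2)) ∧
      Integrable (fun k2 => Kern2 l1 l2 (f t) k k2 * (f t k * f t (k + k2))) ∧
      Integrable (fun k2 => Kern2 l1 l2 (f t) k k2 * (f t (k + k2) * f t k2))) :
    (∀ t : ℝ, 0 ≤ t → ∀ k : Sp d,
      f0 k * Real.exp (-(2 * ν * ‖k‖ ^ 2 + 4 * ‖k‖) * t) ≤ f t k) ∧
    ∀ R0 : ℝ, 0 < R0 → ∀ t : ℝ, 0 ≤ t →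
      Real.exp (-(2 * ν * R0 ^ 2 + 4 * R0) * t) *
          (∫ k, Set.indicator (Metric.ball (0 : Sp d) R0) f0 k) ≤
        ∫ k, Set.indicator (Metric.ball (0 : Sp d) R0) (f t) k := by
  -- abbreviations
  have hMnn : ∀ t, 0 ≤ M0 (f t) := fun t => M0_nonneg _ (hpos t)
  -- The key pointwise lower bound on Qop
  have hQ : ∀ t k, -(4 * ‖k‖) * f t k ≤ Qop l1 l2 (f t) k := by
    intro t k
    set F := f t with hF
    have hFn : ∀ x, 0 ≤ F x := hpos t
    have hFi : Integrable F := hint t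
    set M : ℝ := M0 F with hMdef
    have hM : 0 ≤ M := hMnn t
    obtain ⟨h1, h2, h3, h4, h5, h6⟩ := hreg t k
    -- bound on ∫ Kern1 * (F k * F k1)
    have hb1 : (∫ k1, Kern1 l1 l2 F k k1 * (F k * F k1)) ≤ ‖k‖ * F k / 2 := by
      have hintc : Integrable (fun k1 => ‖k‖ / (2 * M) * (F k * F k1)) := by
        simpa [mul_assoc] using hFi.const_mul (‖k‖ / (2 * M) * F k)
      have := integral_mono h2 hintc (fun k1 => by
        exact mul_le_mul_of_nonneg_right (kern1_le l1 l2 F hFn k k1)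
          (mul_nonneg (hFn k) (hFn k1)))
      refine this.trans ?_
      have : (∫ k1, ‖k‖ / (2 * M) * (F k * F k1))
          = ‖k‖ / (2 * M) * F k * M := by
        rw [show (fun k1 => ‖k‖ / (2 * M) * (F k * F k1))
            = fun k1 => (‖k‖ / (2 * M) * F k) * F k1 from funext fun _ => by ring]
        rw [integral_const_mul]; rfl
      rw [this]
      exact div_mul_bound ‖k‖ (F k) M (norm_nonneg k) (hFn k) hM
    -- bound on ∫ Kern1 * (F k * F (k - k1))
    have hsub : (∫ k1, F (k - k1)) = M := integral_sub_left_eq_self F volume k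
    have hb2 : (∫ k1, Kern1 l1 l2 F k k1 * (F k * F (k - k1))) ≤ ‖k‖ * F k / 2 := by
      have hintc : Integrable (fun k1 => ‖k‖ / (2 * M) * (F k * F (k - k1))) := by
        simpa [mul_assoc] using (hFi.comp_sub_left k).const_mul (‖k‖ / (2 * M) * F k)
      have := integral_mono h3 hintc (fun k1 => by
        exact mul_le_mul_of_nonneg_right (kern1_le l1 l2 F hFn k k1)
          (mul_nonneg (hFn k) (hFn _)))
      refine this.trans ?_
      have : (∫ k1, ‖k‖ / (2 * M) * (F k * F (k - k1)))
          = ‖k‖ / (2 * M) * F k * M := by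
        rw [show (fun k1 => ‖k‖ / (2 * M) * (F k * F (k - k1)))
            = fun k1 => (‖k‖ / (2 * M) * F k) * F (k - k1) from funext fun _ => by ring]
        rw [integral_const_mul, hsub]
      rw [this]
      exact div_mul_bound ‖k‖ (F k) M (norm_nonneg k) (hFn k) hM
    -- bound on ∫ Kern2 * (F k * F k2)
    have hb3 : (∫ k2, Kern2 l1 l2 F k k2 * (F k * F k2)) ≤ ‖k‖ * F k / 2 := by
      have hintc : Integrable (fun k2 => ‖k‖ / (2 * M) * (F k * F k2)) := by
        simpa [mul_assoc] using hFi.const_mul (‖k‖ / (2 * M) * F k)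
      have := integral_mono h4 hintc (fun k2 => by
        exact mul_le_mul_of_nonneg_right (kern2_le l1 l2 F hFn k k2)
          (mul_nonneg (hFn k) (hFn k2)))
      refine this.trans ?_
      have : (∫ k2, ‖k‖ / (2 * M) * (F k * F k2))
          = ‖k‖ / (2 * M) * F k * M := by
        rw [show (fun k2 => ‖k‖ / (2 * M) * (F k * F k2))
            = fun k2 => (‖k‖ / (2 * M) * F k) * F k2 from funext fun _ => by ring]
        rw [integral_const_mul]; rfl
      rw [this]
      exact div_mul_bound ‖k‖ (F k) M (norm_nonneg k) (hFn k) hM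
    -- first integral in Qop
    have hQ1 : Qop l1 l2 F k =
        ((∫ k1, Kern1 l1 l2 F k k1 * (F k1 * F (k - k1)))
          - (∫ k1, Kern1 l1 l2 F k k1 * (F k * F k1))
          - (∫ k1, Kern1 l1 l2 F k k1 * (F k * F (k - k1))))
        - 2 * ((∫ k2, Kern2 l1 l2 F k k2 * (F k * F k2))
          - (∫ k2, Kern2 l1 l2 F k k2 * (F k * F (k + k2)))
          - (∫ k2, Kern2 l1 l2 F k k2 * (F (k + k2) * F k2))) := by
      have e1 : (∫ k1, Vsq k k1 (k - k1) *
          Lor F (omg l1 l2 k - omg l1 l2 k1 - omg l1 l2 (k - k1)) k k1 (k - k1) *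
          (F k1 * F (k - k1) - F k * F k1 - F k * F (k - k1)))
        = (∫ k1, Kern1 l1 l2 F k k1 * (F k1 * F (k - k1))
            - Kern1 l1 l2 F k k1 * (F k * F k1)
            - Kern1 l1 l2 F k k1 * (F k * F (k - k1))) := by
        congr 1; funext k1; unfold Kern1; ring
      have e2 : (∫ k2, Vsq (k + k2) k k2 *
          Lor F (omg l1 l2 (k + k2) - omg l1 l2 k - omg l1 l2 k2) (k + k2) k k2 *
          (F k * F k2 - F k * F (k + k2) - F (k + k2) * F k2))
        = (∫ k2, Kern2 l1 l2 F k k2 * (F k * F k2)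
            - Kern2 l1 l2 F k k2 * (F k * F (k + k2))
            - Kern2 l1 l2 F k k2 * (F (k + k2) * F k2)) := by
        congr 1; funext k2; unfold Kern2; ring
      have d1 := integral_sub h1 h2
      have d2 := integral_sub (h1.sub h2) h3
      have d3 := integral_sub h4 h5
      have d4 := integral_sub (h4.sub h5) h6
      simp only [Pi.sub_apply] at d2 d4
      rw [Qop, e1, e2, d2, d1, d4, d3]
    have hg1 : 0 ≤ ∫ k1, Kern1 l1 l2 F k k1 * (F k1 * F (k - k1)) :=
      integral_nonneg fun k1 => mul_nonneg (kern1_nonneg l1 l2 F hFn k k1)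
        (mul_nonneg (hFn k1) (hFn _))
    have hg2 : 0 ≤ ∫ k2, Kern2 l1 l2 F k k2 * (F k * F (k + k2)) :=
      integral_nonneg fun k2 => mul_nonneg (kern2_nonneg l1 l2 F hFn k k2)
        (mul_nonneg (hFn k) (hFn _))
    have hg3 : 0 ≤ ∫ k2, Kern2 l1 l2 F k k2 * (F (k + k2) * F k2) :=
      integral_nonneg fun k2 => mul_nonneg (kern2_nonneg l1 l2 F hFn k k2)
        (mul_nonneg (hFn _) (hFn k2))
    have hFk : 0 ≤ F k := hFn k
    have hnk : 0 ≤ ‖k‖ := norm_nonneg k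
    rw [hQ1]
    nlinarith [mul_nonneg hnk hFk]
  -- ODE comparison: pointwise exponential lower bound
  have hmain : ∀ t : ℝ, 0 ≤ t → ∀ k : Sp d,
      f0 k * Real.exp (-(2 * ν * ‖k‖ ^ 2 + 4 * ‖k‖) * t) ≤ f t k := by
    intro t ht k
    set c : ℝ := 2 * ν * ‖k‖ ^ 2 + 4 * ‖k‖ with hc
    have hc0 : 0 ≤ c := by positivity
    set g : ℝ → ℝ := fun s => f s k * Real.exp (c * s) with hgdef
    have hder : ∀ s, HasDerivAt g
        ((Qop l1 l2 (f s) k - 2 * ν * ‖k‖ ^ 2 * f s k) * Real.exp (c * s)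
          + f s k * (Real.exp (c * s) * c)) s := by
      intro s
      exact (hsol s k).mul (by simpa using ((hasDerivAt_id s).const_mul c).exp)
    have hdnn : ∀ s, 0 ≤ deriv g s := by
      intro s
      rw [(hder s).deriv]
      have h1 := hQ s k
      have h2 : 0 ≤ Real.exp (c * s) := (Real.exp_pos _).le
      have h3 : 0 ≤ f s k := hpos s k
      have e1 : f s k * (Real.exp (c * s) * c)
          = 2 * ν * ‖k‖ ^ 2 * f s k * Real.exp (c * s)
            + 4 * ‖k‖ * f s k * Real.exp (c * s) := by rw [hc]; ring
      have e2 : -(4 * ‖k‖) * f s k * Real.exp (c * s)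
          ≤ Qop l1 l2 (f s) k * Real.exp (c * s) :=
        mul_le_mul_of_nonneg_right h1 h2
      nlinarith [e1, e2]
    have hmono : Monotone g :=
      monotone_of_deriv_nonneg (fun s => (hder s).differentiableAt) hdnn
    have h0t : g 0 ≤ g t := hmono ht
    have hg0 : g 0 = f0 k := by simp [hgdef, hinit]
    rw [hg0] at h0t
    have : f0 k * Real.exp (-(c * t)) ≤ f t k := by
      rw [Real.exp_neg, ← div_eq_mul_inv, div_le_iff₀ (Real.exp_pos _)]
      exact h0t
    calc f0 k * Real.exp (-(2 * ν * ‖k‖ ^ 2 + 4 * ‖k‖) * t)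
        = f0 k * Real.exp (-(c * t)) := by congr 2; rw [hc]; ring
      _ ≤ f t k := this
  refine ⟨hmain, ?_⟩
  intro R0 hR0 t ht
  set C : ℝ := 2 * ν * R0 ^ 2 + 4 * R0 with hC
  rw [← integral_const_mul]
  apply integral_mono
  · exact (hf0i.indicator measurableSet_ball).const_mul _
  · exact (hint t).indicator measurableSet_ball
  intro k
  by_cases hk : k ∈ Metric.ball (0 : Sp d) R0
  · simp only [Set.indicator_of_mem hk]
    have hkR : ‖k‖ ≤ R0 := by
      have := mem_ball_zero_iff.mp hk
      exact this.le
    have hck : 2 * ν * ‖k‖ ^ 2 + 4 * ‖k‖ ≤ C := by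
      have hn : 0 ≤ ‖k‖ := norm_nonneg k
      have hsq : ‖k‖ ^ 2 ≤ R0 ^ 2 := pow_le_pow_left₀ hn hkR 2
      rw [hC]
      nlinarith [mul_le_mul_of_nonneg_left hsq hν.le]
    have hexp : Real.exp (-C * t) ≤ Real.exp (-(2 * ν * ‖k‖ ^ 2 + 4 * ‖k‖) * t) := by
      apply Real.exp_le_exp.mpr
      nlinarith
    calc Real.exp (-C * t) * f0 k
        ≤ Real.exp (-(2 * ν * ‖k‖ ^ 2 + 4 * ‖k‖) * t) * f0 k :=
          mul_le_mul_of_nonneg_right hexp (hf0 k)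
      _ ≤ f t k := by rw [mul_comm]; exact hmain t ht k
  · simp [Set.indicator_of_notMem hk]
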